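/- Let α and q be real numbers and n, r natural numbers. Then Σ_{k=0}^{n} (-1)^k binom(α, k+r) C(n,k) (1-q)^k q^{n-k} = Σ_{j=0}^{n} (-1)^{n-j} C(n,j) binom(j+α, n+r) q^j, where binom(t, s) denotes the generalized binomial coefficient of a real number t and natural number s. -/

import Mathlib

open Finset

/-- Generalized binomial coefficient `t(t-1)⋯(t-s+1)/s!` of a real `t`. -/
noncomputable def rchoose (t : ℝ) (s : ℕ) : ℝ :=
  (∏ i ∈ range s, (t - (i : ℝ))) / (s.factorial : ℝ)

lemma rchoose_zero (t : ℝ) : rchoose t 0 = 1 := by simp [rchoose]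

lemma rchoose_pascal (x : ℝ) (s : ℕ) :
    rchoose (x + 1) (s + 1) = rchoose x (s + 1) + rchoose x s := by
  unfold rchoose
  rw [Finset.prod_range_succ' (fun i => x + 1 - (i : ℝ)), Finset.prod_range_succ]
  have h : ∏ i ∈ range s, (x + 1 - ((i : ℕ) + 1 : ℕ)) = ∏ i ∈ range s, (x - i) := by
    apply Finset.prod_congr rfl; intro i _; push_cast; ring
  rw [h, Nat.factorial_succ]
  have h1 : ((s + 1 : ℕ) : ℝ) ≠ 0 := by positivity
  have h2 : (s.factorial : ℝ) ≠ 0 := by positivity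
  push_cast
  field_simp
  ring

lemma rchoose_vandermonde (α : ℝ) (j s : ℕ) :
    rchoose ((j : ℝ) + α) s = ∑ m ∈ range (s + 1), (j.choose m : ℝ) * rchoose α (s - m) := by
  induction j generalizing s with
  | zero =>
    rw [Finset.sum_eq_single 0]
    · simp [rchoose]
    · intro m _ hm
      rw [Nat.choose_eq_zero_of_lt (Nat.pos_of_ne_zero hm)]; simp
    · simp
  | succ j ih =>
    have hcast : ((j + 1 : ℕ) : ℝ) + α = ((j : ℝ) + α) + 1 := by push_cast; ring
    cases s with
    | zero => simp [rchoose]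
    | succ s =>
      rw [hcast, rchoose_pascal, ih (s + 1), ih s]
      rw [Finset.sum_range_succ' (fun m => ((j + 1).choose m : ℝ) * rchoose α (s + 1 - m))]
      have h1 : ∀ m, ((j + 1).choose (m + 1) : ℝ) * rchoose α (s + 1 - (m + 1)) =
          (j.choose m : ℝ) * rchoose α (s - m) + (j.choose (m + 1) : ℝ) * rchoose α (s - m) := by
        intro m
        rw [Nat.choose_succ_succ, Nat.succ_sub_succ]
        push_cast
        ring
      rw [Finset.sum_congr rfl (fun m _ => h1 m), Finset.sum_add_distrib]
      rw [Finset.sum_range_succ' (fun m => (j.choose m : ℝ) * rchoose α (s + 1 - m))]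
      simp only [Nat.choose_zero_right, Nat.cast_one, one_mul, Nat.sub_zero, Nat.succ_sub_succ]
      ring

lemma innerSumAux (q : ℝ) (n m : ℕ) (hm : m ≤ n) :
    ∑ j ∈ range (n + 1), (-1 : ℝ) ^ (n - j) * (n.choose j : ℝ) * (j.choose m : ℝ) * q ^ j =
      (n.choose m : ℝ) * q ^ m * (q - 1) ^ (n - m) := by
  set f : ℕ → ℝ := fun j => (-1 : ℝ) ^ (n - j) * (n.choose j : ℝ) * (j.choose m : ℝ) * q ^ j with hf
  have step1 : ∑ j ∈ range (n + 1), f j = ∑ j ∈ Finset.Ico m (n + 1), f j := by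
    apply (Finset.sum_subset _ _).symm
    · intro j hj
      rw [Finset.mem_Ico] at hj
      exact Finset.mem_range.2 hj.2
    · intro j hj hj'
      rw [Finset.mem_range] at hj
      rw [Finset.mem_Ico] at hj'
      have : j < m := by omega
      simp [hf, Nat.choose_eq_zero_of_lt this]
  rw [step1, Finset.sum_Ico_eq_sum_range]
  have hNM : n + 1 - m = (n - m) + 1 := by omega
  rw [hNM]
  have key : ∀ t ∈ range (n - m + 1), f (m + t) =
      (n.choose m : ℝ) * q ^ m * ((-1 : ℝ) ^ (n - m - t) * q ^ t * ((n - m).choose t : ℝ)) := by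
    intro t ht
    rw [Finset.mem_range] at ht
    have htle : t ≤ n - m := by omega
    have hmt : m + t ≤ n := by omega
    have hchoose : n.choose (m + t) * (m + t).choose m = n.choose m * (n - m).choose t := by
      have := Nat.choose_mul (n := n) (k := m + t) (s := m) (Nat.le_add_right m t)
      simpa using this
    have hsub : n - (m + t) = n - m - t := by omega
    simp only [hf, hsub]
    rw [pow_add]
    have : ((n.choose (m + t) : ℝ)) * ((m + t).choose m : ℝ) =
        (n.choose m : ℝ) * ((n - m).choose t : ℝ) := by exact_mod_cast congrArg Nat.cast hchoose
    linear_combination ((-1 : ℝ) ^ (n - m - t) * q ^ m * q ^ t) * this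
  rw [Finset.sum_congr rfl key, ← Finset.mul_sum]
  congr 1
  rw [sub_pow q 1 (n - m)]
  apply Finset.sum_congr rfl
  intro t ht
  rw [Finset.mem_range] at ht
  have : (-1 : ℝ) ^ (t + (n - m)) = (-1 : ℝ) ^ (n - m - t) := by
    rw [show t + (n - m) = (n - m - t) + 2 * t by omega, pow_add]
    simp [pow_mul]
  rw [this, one_pow]
  ring

theorem binomial_bernoulli_transform (α q : ℝ) (n r : ℕ) :
    ∑ k ∈ range (n + 1),
        (-1 : ℝ) ^ k * rchoose α (k + r) * (n.choose k : ℝ) * (1 - q) ^ k * q ^ (n - k) =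
      ∑ j ∈ range (n + 1),
        (-1 : ℝ) ^ (n - j) * (n.choose j : ℝ) * rchoose ((j : ℝ) + α) (n + r) * q ^ j := by
  set f : ℕ → ℝ := fun m =>
    rchoose α (n + r - m) * ((n.choose m : ℝ) * q ^ m * (q - 1) ^ (n - m)) with hf
  have step1 : ∑ j ∈ range (n + 1),
      (-1 : ℝ) ^ (n - j) * (n.choose j : ℝ) * rchoose ((j : ℝ) + α) (n + r) * q ^ j =
      ∑ j ∈ range (n + 1), ∑ m ∈ range (n + r + 1),
        rchoose α (n + r - m) *
          ((-1 : ℝ) ^ (n - j) * (n.choose j : ℝ) * (j.choose m : ℝ) * q ^ j) := by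
    apply Finset.sum_congr rfl
    intro j _
    rw [rchoose_vandermonde α j (n + r), Finset.mul_sum, Finset.sum_mul]
    apply Finset.sum_congr rfl
    intro m _
    ring
  have step2 : ∑ j ∈ range (n + 1), ∑ m ∈ range (n + r + 1),
      rchoose α (n + r - m) *
        ((-1 : ℝ) ^ (n - j) * (n.choose j : ℝ) * (j.choose m : ℝ) * q ^ j) =
      ∑ m ∈ range (n + r + 1), rchoose α (n + r - m) *
        ∑ j ∈ range (n + 1),
          (-1 : ℝ) ^ (n - j) * (n.choose j : ℝ) * (j.choose m : ℝ) * q ^ j := by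
    rw [Finset.sum_comm]
    apply Finset.sum_congr rfl
    intro m _
    rw [Finset.mul_sum]
  have step3 : ∑ m ∈ range (n + r + 1), rchoose α (n + r - m) *
      ∑ j ∈ range (n + 1),
        (-1 : ℝ) ^ (n - j) * (n.choose j : ℝ) * (j.choose m : ℝ) * q ^ j =
      ∑ m ∈ range (n + 1), f m := by
    rw [← Finset.sum_subset (Finset.range_subset_range.2 (by omega : n + 1 ≤ n + r + 1))]
    · apply Finset.sum_congr rfl
      intro m hm
      rw [Finset.mem_range] at hm
      rw [innerSumAux q n m (by omega)]
    · intro m hm hm'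
      rw [Finset.mem_range] at hm
      rw [Finset.mem_range, not_lt] at hm'
      have hz : ∑ j ∈ range (n + 1),
          (-1 : ℝ) ^ (n - j) * (n.choose j : ℝ) * (j.choose m : ℝ) * q ^ j = 0 := by
        apply Finset.sum_eq_zero
        intro j hj
        rw [Finset.mem_range] at hj
        rw [Nat.choose_eq_zero_of_lt (by omega : j < m)]
        simp
      rw [hz, mul_zero]
  have step4 : ∑ k ∈ range (n + 1),
      (-1 : ℝ) ^ k * rchoose α (k + r) * (n.choose k : ℝ) * (1 - q) ^ k * q ^ (n - k) =
      ∑ k ∈ range (n + 1), f (n - k) := by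
    apply Finset.sum_congr rfl
    intro k hk
    rw [Finset.mem_range] at hk
    have hk' : k ≤ n := by omega
    have h1 : n + r - (n - k) = k + r := by omega
    have h2 : n - (n - k) = k := by omega
    have h3 : n.choose (n - k) = n.choose k := Nat.choose_symm hk'
    simp only [hf, h1, h2, h3]
    have h4 : (q - 1) ^ k = (-1 : ℝ) ^ k * (1 - q) ^ k := by
      rw [← neg_pow]
      congr 1
      ring
    rw [h4]
    ring
  rw [step1, step2, step3, step4]
  have := Finset.sum_range_reflect f (n + 1)
  simp only [Nat.add_sub_cancel] at this
  exact this
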